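/- arXiv:2102.11857 — 5 statements merged into one kernel-verified Lean document; each statement's English description precedes it below -/
import Mathlib

section
/- Let X be a normal symmetric subset of a group G such that |x^G| ≤ n for every x ∈ X, and let H = ⟨X⟩. Then for each x ∈ X, the normal closure ⟨[H,x]^G⟩ of [H,x] in G is finite of n-bounded order. -/
/-- The conjugacy class of `x` in `G`. -/
def conjClass {G : Type*} [Group G] (x : G) : Set G := {y | ∃ g : G, y = g⁻¹ * x * g}

/-- The subgroup `[H, x]` generated by the commutators `[h, x]` with `h ∈ H`. -/
def commSub {G : Type*} [Group G] (H : Subgroup G) (x : G) : Subgroup G :=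
  Subgroup.closure {z | ∃ h ∈ H, z = h⁻¹ * x⁻¹ * h * x}

open Subgroup
open scoped commutatorElement

section Prelim
variable {G : Type*} [Group G]

lemma self_mem_conjClass (x : G) : x ∈ conjClass x := ⟨1, by group⟩

lemma conjClass_eq_orbit (x : G) : conjClass x = MulAction.orbit (ConjAct G) x := by
  ext y
  rw [ConjAct.mem_orbit_conjAct, isConj_iff]
  constructor
  · rintro ⟨g, rfl⟩; exact ⟨g, by group⟩
  · rintro ⟨c, rfl⟩; exact ⟨c, by group⟩

lemma index_centralizer_eq (x : G) : (Subgroup.centralizer {x}).index = (conjClass x).ncard := by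
  rw [conjClass_eq_orbit, ← MulAction.index_stabilizer, ConjAct.stabilizer_eq_centralizer]
  rfl

end Prelim

section Schur
variable {T : Type*} [Group T]

lemma conj_mul_center {u : T} (hu : u ∈ Subgroup.center T) (a c : T) :
    (a * u) * c * (a * u)⁻¹ = a * c * a⁻¹ := by
  have h : u * c = c * u := (Subgroup.mem_center_iff.mp hu c).symm
  calc (a * u) * c * (a * u)⁻¹ = a * (u * c * u⁻¹) * a⁻¹ := by group
    _ = a * c * a⁻¹ := by rw [h, mul_inv_cancel_right]

lemma commutatorElement_mul_center {z w : T} (hz : z ∈ Subgroup.center T)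
    (hw : w ∈ Subgroup.center T) (a b : T) : ⁅a * z, b * w⁆ = ⁅a, b⁆ := by
  rw [commutatorElement_def, commutatorElement_def]
  rw [conj_mul_center hz a (b * w)]
  have h2 : w * a⁻¹ = a⁻¹ * w := (Subgroup.mem_center_iff.mp hw a⁻¹).symm
  calc a * (b * w) * a⁻¹ * (b * w)⁻¹ = a * b * (w * a⁻¹ * w⁻¹) * b⁻¹ := by group
    _ = a * b * (a⁻¹ * w * w⁻¹) * b⁻¹ := by rw [← h2]
    _ = a * b * a⁻¹ * b⁻¹ := by group

/-- bound function from Schur's theorem -/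
def sigmaBound (m : ℕ) : ℕ := Subgroup.cardCommutatorBound (m * m)

lemma cardCommutatorBound_mono {a b : ℕ} (h : a ≤ b) :
    Subgroup.cardCommutatorBound a ≤ Subgroup.cardCommutatorBound b := by
  unfold Subgroup.cardCommutatorBound
  rcases Nat.eq_zero_or_pos a with rfl | ha
  · rcases Nat.eq_zero_or_pos b with rfl | hb
    · exact le_rfl
    · simpa using Nat.one_le_pow _ _ (Nat.pow_pos hb)
  · have hb : 0 < b := lt_of_lt_of_le ha h
    have h1 : a ^ (2 * a) ≤ b ^ (2 * b) :=
      (Nat.pow_le_pow_left h _).trans (Nat.pow_le_pow_right hb (by omega))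
    have h2 : a ^ (2 * a + 1) + 1 ≤ b ^ (2 * b + 1) + 1 := by
      have := (Nat.pow_le_pow_left h (2 * a + 1)).trans (Nat.pow_le_pow_right hb
        (show 2 * a + 1 ≤ 2 * b + 1 by omega))
      omega
    calc (a ^ (2 * a)) ^ (a ^ (2 * a + 1) + 1) ≤ (b ^ (2 * b)) ^ (a ^ (2 * a + 1) + 1) :=
          Nat.pow_le_pow_left h1 _
      _ ≤ (b ^ (2 * b)) ^ (b ^ (2 * b + 1) + 1) :=
          Nat.pow_le_pow_right (Nat.one_le_pow _ _ hb) h2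

lemma schur_bound {m : ℕ} (hm : (Subgroup.center T).index ≤ m)
    (h0 : (Subgroup.center T).index ≠ 0) :
    Finite (_root_.commutator T) ∧ Nat.card (_root_.commutator T) ≤ sigmaBound m := by
  have hcq : Nat.card (T ⧸ Subgroup.center T) ≠ 0 := by
    rwa [← Subgroup.index_eq_card]
  have hfq : Finite (T ⧸ Subgroup.center T) := Nat.finite_of_card_ne_zero hcq
  set ψ : (T ⧸ Subgroup.center T) × (T ⧸ Subgroup.center T) → commutatorSet T :=
    fun p => ⟨⁅p.1.out, p.2.out⁆, ⟨p.1.out, p.2.out, rfl⟩⟩ with hψdef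
  have hψ : Function.Surjective ψ := by
    rintro ⟨c, a, b, rfl⟩
    refine ⟨(QuotientGroup.mk a, QuotientGroup.mk b), ?_⟩
    have ha : a⁻¹ * (QuotientGroup.mk (s := Subgroup.center T) a).out ∈ Subgroup.center T := by
      rw [← QuotientGroup.eq]
      exact (QuotientGroup.out_eq' _).symm
    have hb : b⁻¹ * (QuotientGroup.mk (s := Subgroup.center T) b).out ∈ Subgroup.center T := by
      rw [← QuotientGroup.eq]
      exact (QuotientGroup.out_eq' _).symm
    apply Subtype.ext
    show ⁅(QuotientGroup.mk a).out, (QuotientGroup.mk b).out⁆ = ⁅a, b⁆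
    have ea : (QuotientGroup.mk (s := Subgroup.center T) a).out
        = a * (a⁻¹ * (QuotientGroup.mk (s := Subgroup.center T) a).out) := by group
    have eb : (QuotientGroup.mk (s := Subgroup.center T) b).out
        = b * (b⁻¹ * (QuotientGroup.mk (s := Subgroup.center T) b).out) := by group
    rw [ea, eb, commutatorElement_mul_center ha hb]
  have hfin : Finite (commutatorSet T) := Finite.of_surjective ψ hψ
  have hcard : Nat.card (commutatorSet T) ≤ m * m := by
    refine (Nat.card_le_card_of_surjective ψ hψ).trans ?_
    rw [Nat.card_prod]
    have : Nat.card (T ⧸ Subgroup.center T) ≤ m := by rwa [← Subgroup.index_eq_card]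
    exact Nat.mul_le_mul this this
  exact ⟨inferInstance,
    (Subgroup.card_commutator_le_of_finite_commutatorSet T).trans (cardCommutatorBound_mono hcard)⟩

end Schur

section CenterClosure
variable {G : Type*} [Group G]

lemma center_closure_index {s : Set G} (hs : s.Finite) {n k : ℕ} (hn : 1 ≤ n)
    (hcard : s.ncard ≤ k)
    (hcen : ∀ y ∈ s, (Subgroup.centralizer {y}).index ≤ n ∧
      (Subgroup.centralizer {y}).index ≠ 0) :
    (Subgroup.center ↥(Subgroup.closure s)).index ≤ n ^ k ∧
      (Subgroup.center ↥(Subgroup.closure s)).index ≠ 0 := by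
  haveI : Fintype ↥s := hs.fintype
  set T := Subgroup.closure s with hT
  set W : Subgroup G := ⨅ (y : ↥s), Subgroup.centralizer {(y : G)} with hW
  have hWile : W.index ≤ n ^ k := by
    refine (Subgroup.index_iInf_le _).trans ?_
    calc ∏ y : ↥s, (Subgroup.centralizer {(y : G)}).index
        ≤ ∏ _y : ↥s, n := Finset.prod_le_prod' (fun y _ => (hcen y y.2).1)
      _ = n ^ (Fintype.card ↥s) := by rw [Finset.prod_const, Finset.card_univ]
      _ ≤ n ^ k := Nat.pow_le_pow_right hn
          (by rwa [← Nat.card_eq_fintype_card, Nat.card_coe_set_eq])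
  have hW0 : W.index ≠ 0 :=
    Subgroup.index_iInf_ne_zero (fun y => (hcen y y.2).2)
  have hWc : ∀ w ∈ W, ∀ t ∈ T, w * t = t * w := by
    intro w hw t ht
    induction ht using Subgroup.closure_induction with
    | mem g hg =>
        have := Subgroup.mem_iInf.mp hw ⟨g, hg⟩
        have := Subgroup.mem_centralizer_iff.mp this g (Set.mem_singleton g)
        exact this.symm
    | one => simp
    | mul a b _ _ iha ihb => rw [mul_assoc, ← ihb, ← mul_assoc, iha, mul_assoc]
    | inv a _ ih =>
        have : a * (w * a⁻¹) = a * (a⁻¹ * w) := by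
          rw [← mul_assoc, ← ih, mul_assoc]; simp
        have := mul_left_cancel this
        rw [← this]
  have hle : W.subgroupOf T ≤ Subgroup.center ↥T := by
    intro w hw
    rw [Subgroup.mem_center_iff]
    intro t
    apply Subtype.ext
    push_cast
    exact (hWc w (Subgroup.mem_subgroupOf.mp hw) t t.2).symm
  have hrel0 : W.relIndex T ≠ 0 := by
    intro h
    exact hW0 (Subgroup.index_eq_zero_of_relIndex_eq_zero h)
  have hrelle : W.relIndex T ≤ n ^ k := by
    have := Subgroup.relIndex_le_of_le_right (le_top : T ≤ ⊤)
      (by rwa [Subgroup.relIndex_top_right] : W.relIndex ⊤ ≠ 0)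
    rw [Subgroup.relIndex_top_right] at this
    exact le_trans this hWile
  have hdvd : (Subgroup.center ↥T).index ∣ W.relIndex T :=
    Subgroup.index_dvd_of_le hle
  constructor
  · exact le_trans (Nat.le_of_dvd (Nat.pos_of_ne_zero hrel0) hdvd) hrelle
  · intro h
    rw [h] at hdvd
    exact hrel0 (Nat.eq_zero_of_zero_dvd hdvd)

lemma commutator_closure_bound {s : Set G} (hs : s.Finite) {n k : ℕ} (hn : 1 ≤ n)
    (hcard : s.ncard ≤ k)
    (hcen : ∀ y ∈ s, (Subgroup.centralizer {y}).index ≤ n ∧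
      (Subgroup.centralizer {y}).index ≠ 0) :
    Finite (_root_.commutator ↥(Subgroup.closure s)) ∧
      Nat.card (_root_.commutator ↥(Subgroup.closure s)) ≤ sigmaBound (n ^ k) := by
  obtain ⟨h1, h2⟩ := center_closure_index hs hn hcard hcen
  exact schur_bound h1 h2

lemma commutatorElement_pow_eq_one {y z : G} {n : ℕ} (hn : 1 ≤ n)
    (hy : (Subgroup.centralizer {y}).index ≤ n ∧ (Subgroup.centralizer {y}).index ≠ 0)
    (hz : (Subgroup.centralizer {z}).index ≤ n ∧ (Subgroup.centralizer {z}).index ≠ 0) :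
    ⁅y, z⁆ ^ (sigmaBound (n ^ 2)).factorial = 1 := by
  set T := Subgroup.closure ({y, z} : Set G) with hT
  have hyT : y ∈ T := Subgroup.subset_closure (by simp)
  have hzT : z ∈ T := Subgroup.subset_closure (by simp)
  obtain ⟨hfin, hcard⟩ := commutator_closure_bound (s := ({y, z} : Set G)) (k := 2)
    (Set.toFinite _) hn
    (le_trans (Set.ncard_insert_le _ _) (by simp [Set.ncard_singleton])) (by
      rintro w hw
      rcases hw with rfl | hw
      · exact hy
      · rw [Set.mem_singleton_iff] at hw; subst hw; exact hz)
  set u : ↥T := ⟨y, hyT⟩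
  set v : ↥T := ⟨z, hzT⟩
  have hmem : ⁅u, v⁆ ∈ _root_.commutator ↥T := by
    rw [_root_.commutator_def]
    exact Subgroup.commutator_mem_commutator (Subgroup.mem_top u) (Subgroup.mem_top v)
  set w : ↥(_root_.commutator ↥T) := ⟨⁅u, v⁆, hmem⟩ with hwdef
  have hord : orderOf w ∣ (sigmaBound (n ^ 2)).factorial := by
    refine Nat.dvd_factorial (orderOf_pos w) ?_
    exact le_trans (Nat.le_of_dvd Nat.card_pos (orderOf_dvd_natCard w)) hcard
  have hw1 : w ^ (sigmaBound (n ^ 2)).factorial = 1 := orderOf_dvd_iff_pow_eq_one.mp hord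
  have hw2 : ⁅u, v⁆ ^ (sigmaBound (n ^ 2)).factorial = 1 := by
    have := congrArg (Subtype.val) hw1
    push_cast at this
    simpa [hwdef] using this
  have := congrArg (Subtype.val) hw2
  push_cast at this
  rw [commutatorElement_def] at this
  push_cast at this
  rw [commutatorElement_def]
  simpa [u, v] using this

end CenterClosure

lemma pow_mod_of_pow_eq_one {A : Type*} [Group A] {a : A} {e : ℕ} (h : a ^ e = 1) (m : ℕ) :
    a ^ (m % e) = a ^ m := by
  rw [pow_eq_pow_iff_modEq]
  exact (Nat.mod_mod_of_dvd m (orderOf_dvd_of_pow_eq_one h))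

lemma card_closure_le_of_exponent {A : Type*} [CommGroup A] {s : Set A} (hs : s.Finite)
    {k e : ℕ} (he : 1 ≤ e) (hcard : s.ncard ≤ k) (hexp : ∀ a ∈ s, a ^ e = 1) :
    Finite ↥(Subgroup.closure s) ∧ Nat.card ↥(Subgroup.closure s) ≤ e ^ k := by
  classical
  haveI : Fintype ↥s := hs.fintype
  set F : (↥s → Fin e) → ↥(Subgroup.closure s) := fun v =>
    ⟨∏ a : ↥s, (a : A) ^ ((v a : ℕ)),
      Subgroup.prod_mem _ (fun a _ => Subgroup.pow_mem _ (Subgroup.subset_closure a.2) _)⟩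
    with hF
  have hFsurj : Function.Surjective F := by
    rintro ⟨g, hg⟩
    have : ∃ v : ↥s → Fin e, ∏ a : ↥s, (a : A) ^ ((v a : ℕ)) = g := by
      induction hg using Subgroup.closure_induction with
      | mem w hw =>
          refine ⟨fun a => if a = ⟨w, hw⟩ then ⟨1 % e, Nat.mod_lt _ he⟩ else ⟨0, he⟩, ?_⟩
          rw [Finset.prod_eq_single (⟨w, hw⟩ : ↥s)]
          · simp only [if_pos rfl]
            exact (pow_mod_of_pow_eq_one (hexp w hw) 1).trans (pow_one w)
          · intro b _ hb
            simp [if_neg hb]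
          · intro h; exact absurd (Finset.mem_univ _) h
      | one =>
          exact ⟨fun _ => ⟨0, he⟩, by simp⟩
      | mul a b _ _ iha ihb =>
          obtain ⟨v₁, hv₁⟩ := iha
          obtain ⟨v₂, hv₂⟩ := ihb
          refine ⟨fun a => ⟨((v₁ a : ℕ) + (v₂ a : ℕ)) % e, Nat.mod_lt _ he⟩, ?_⟩
          rw [← hv₁, ← hv₂, ← Finset.prod_mul_distrib]
          refine Finset.prod_congr rfl (fun i _ => ?_)
          rw [pow_mod_of_pow_eq_one (hexp i i.2), pow_add]
      | inv a _ ih =>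
          obtain ⟨v, hv⟩ := ih
          refine ⟨fun a => ⟨(e - (v a : ℕ)) % e, Nat.mod_lt _ he⟩, ?_⟩
          rw [← hv, ← Finset.prod_inv_distrib]
          refine Finset.prod_congr rfl (fun i _ => ?_)
          rw [pow_mod_of_pow_eq_one (hexp i i.2)]
          refine eq_inv_of_mul_eq_one_left ?_
          rw [← pow_add, Nat.sub_add_cancel (le_of_lt (v i).2), hexp i i.2]
    obtain ⟨v, hv⟩ := this
    exact ⟨v, Subtype.ext hv⟩
  constructor
  · exact Finite.of_surjective F hFsurj
  · refine (Nat.card_le_card_of_surjective F hFsurj).trans ?_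
    rw [Nat.card_eq_fintype_card, Fintype.card_fun, Fintype.card_fin]
    refine Nat.pow_le_pow_right he ?_
    rwa [← Nat.card_coe_set_eq, Nat.card_eq_fintype_card] at hcard

lemma card_le_of_hom {K A : Type*} [Group K] [Group A] (f : K →* A)
    (hker : Finite f.ker) (himg : Finite f.range) :
    Finite K ∧ Nat.card K ≤ Nat.card f.range * Nat.card f.ker := by
  have e2 : (K ⧸ f.ker) ≃ f.range := (QuotientGroup.quotientKerEquivRange f).toEquiv
  haveI : Finite (K ⧸ f.ker) := Finite.of_equiv _ e2.symm
  have e1 : K ≃ (K ⧸ f.ker) × f.ker := Subgroup.groupEquivQuotientProdSubgroup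
  constructor
  · exact Finite.of_equiv _ e1.symm
  · have heq : Nat.card K = Nat.card f.range * Nat.card f.ker := by
      calc Nat.card K = Nat.card ((K ⧸ f.ker) × f.ker) := Nat.card_congr e1
        _ = Nat.card (K ⧸ f.ker) * Nat.card f.ker := Nat.card_prod _ _
        _ = Nat.card f.range * Nat.card f.ker := by rw [Nat.card_congr e2]
    exact heq.le

def cBound (n : ℕ) : ℕ := (sigmaBound (n ^ 2)).factorial ^ n * sigmaBound (n ^ n)

lemma commSub_bound {G : Type} [Group G] {n : ℕ} {X : Set G}
    (hsym : X⁻¹ = X) (hnorm : ∀ g : G, ∀ x ∈ X, g⁻¹ * x * g ∈ X)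
    (hcls : ∀ x ∈ X, (conjClass x).Finite ∧ (conjClass x).ncard ≤ n)
    {x : G} (hx : x ∈ X) :
    Finite ↥(commSub (Subgroup.closure X) x) ∧
      Nat.card ↥(commSub (Subgroup.closure X) x) ≤ cBound n := by
  set H := Subgroup.closure X with hH
  have hXinv : ∀ y ∈ X, y⁻¹ ∈ X := fun y hy => by
    rw [← hsym]; simpa [Set.mem_inv] using hy
  have hcen : ∀ y ∈ X, (Subgroup.centralizer {y}).index ≤ n ∧
      (Subgroup.centralizer {y}).index ≠ 0 := by
    intro y hy
    obtain ⟨hf, hc⟩ := hcls y hy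
    refine ⟨by rw [index_centralizer_eq]; exact hc, ?_⟩
    rw [index_centralizer_eq]
    exact ((Set.ncard_pos hf).mpr ⟨y, self_mem_conjClass y⟩).ne'
  have hn1 : 1 ≤ n := by
    obtain ⟨h1, h2⟩ := hcen x hx
    omega
  have hconjX : conjClass x ⊆ X := by rintro y ⟨g, rfl⟩; exact hnorm g x hx
  -- the subgroup S = ⟨x^H⟩
  set Sset : Set G := {g | ∃ h ∈ H, g = h⁻¹ * x * h} with hSset
  have hSsub : Sset ⊆ conjClass x := by rintro g ⟨h, hh, rfl⟩; exact ⟨h, rfl⟩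
  have hSfin : Sset.Finite := (hcls x hx).1.subset hSsub
  have hScard : Sset.ncard ≤ n :=
    le_trans (Set.ncard_le_ncard hSsub (hcls x hx).1) (hcls x hx).2
  set S := Subgroup.closure Sset with hS
  have hxS : x ∈ S := Subgroup.subset_closure ⟨1, one_mem _, by simp⟩
  have hconjS : ∀ h ∈ H, ∀ g ∈ S, h⁻¹ * g * h ∈ S := by
    intro h hh g hg
    induction hg using Subgroup.closure_induction with
    | mem w hw =>
        obtain ⟨h', hh', rfl⟩ := hw
        exact Subgroup.subset_closure ⟨h' * h, mul_mem hh' hh, by group⟩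
    | one => simpa using one_mem S
    | mul a b _ _ iha ihb =>
        have heq : h⁻¹ * (a * b) * h = (h⁻¹ * a * h) * (h⁻¹ * b * h) := by group
        rw [heq]; exact mul_mem iha ihb
    | inv a _ ih =>
        have heq : h⁻¹ * a⁻¹ * h = (h⁻¹ * a * h)⁻¹ := by group
        rw [heq]; exact inv_mem ih
  -- the generating set of [H,x]
  set genSet : Set G := {z | ∃ h ∈ H, z = h⁻¹ * x⁻¹ * h * x} with hgen
  have hgenS : genSet ⊆ ↑S := by
    rintro z ⟨h, hh, rfl⟩
    have h1 : h⁻¹ * x * h ∈ S := Subgroup.subset_closure ⟨h, hh, rfl⟩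
    have heq : h⁻¹ * x⁻¹ * h * x = (h⁻¹ * x * h)⁻¹ * x := by group
    rw [heq]; exact mul_mem (inv_mem h1) hxS
  have hgensub : genSet ⊆ (fun w => w⁻¹ * x) '' (conjClass x) := by
    rintro z ⟨h, hh, rfl⟩
    exact ⟨h⁻¹ * x * h, ⟨h, rfl⟩, by group⟩
  have hgenfin : genSet.Finite := ((hcls x hx).1.image _).subset hgensub
  have hgencard : genSet.ncard ≤ n := by
    refine le_trans (le_trans (Set.ncard_le_ncard hgensub ((hcls x hx).1.image _)) ?_)
      (hcls x hx).2
    exact Set.ncard_image_le (hcls x hx).1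
  -- Schur on S
  obtain ⟨hDfin, hDcard⟩ := commutator_closure_bound hSfin hn1 hScard
    (fun y hy => hcen y (hconjX (hSsub hy)))
  -- abelianization
  set e : ℕ := (sigmaBound (n ^ 2)).factorial with he
  have he1 : 1 ≤ e := Nat.factorial_pos _
  set π : ↥S →* Abelianization ↥S := Abelianization.of with hπ
  have conj_pow : ∀ b (hb : b ∈ H) (u : ↥S) (hmem : b⁻¹ * ↑u * b ∈ S),
      (π u) ^ e = 1 → (π ⟨b⁻¹ * ↑u * b, hmem⟩) ^ e = 1 := by
    intro b hb u hmem hu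
    let ψ : ↥S →* ↥S :=
      { toFun := fun w => ⟨b⁻¹ * ↑w * b, hconjS b hb ↑w w.2⟩
        map_one' := by ext; simp
        map_mul' := fun w₁ w₂ => by ext; push_cast; group }
    have hψ : (⟨b⁻¹ * ↑u * b, hmem⟩ : ↥S) = ψ u := rfl
    rw [hψ, hπ, ← Abelianization.map_of, ← map_pow]
    rw [hπ] at hu
    rw [hu, map_one]
  -- key torsion claim
  have key : ∀ h (hh : h ∈ H) (u : ↥S), (u : G) = h⁻¹ * x⁻¹ * h * x → (π u) ^ e = 1 := by
    intro h hh
    induction hh using Subgroup.closure_induction with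
    | mem y hy =>
        intro u hu
        have hcomm : (u : G) = ⁅y⁻¹, x⁻¹⁆ := by
          rw [hu, commutatorElement_def]; group
        have hpow : (u : G) ^ e = 1 := by
          rw [hcomm, he]
          exact commutatorElement_pow_eq_one hn1 (hcen _ (hXinv y hy)) (hcen _ (hXinv x hx))
        have hu1 : u ^ e = 1 := by
          apply Subtype.ext; push_cast; exact hpow
        rw [← map_pow, hu1, map_one]
    | one =>
        intro u hu
        have : u = 1 := by apply Subtype.ext; rw [hu]; simp
        rw [this, map_one, one_pow]
    | mul a b ha hb iha ihb =>
        intro u hu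
        have hu₁mem : a⁻¹ * x⁻¹ * a * x ∈ S := hgenS ⟨a, ha, rfl⟩
        have hu₂mem : b⁻¹ * x⁻¹ * b * x ∈ S := hgenS ⟨b, hb, rfl⟩
        set u₁ : ↥S := ⟨_, hu₁mem⟩ with hu₁
        set u₂ : ↥S := ⟨_, hu₂mem⟩ with hu₂
        have hcmem : b⁻¹ * ↑u₁ * b ∈ S := hconjS b hb _ u₁.2
        have hsplit : u = (⟨b⁻¹ * ↑u₁ * b, hcmem⟩ : ↥S) * u₂ := by
          apply Subtype.ext; push_cast; rw [hu]; simp only [hu₁, hu₂]; group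
        have h1 : (π ⟨b⁻¹ * ↑u₁ * b, hcmem⟩) ^ e = 1 := conj_pow b hb u₁ hcmem (iha u₁ rfl)
        have h2 : (π u₂) ^ e = 1 := ihb u₂ rfl
        rw [hsplit, map_mul, mul_pow, h1, h2, one_mul]
    | inv a ha iha =>
        intro u hu
        have hu₁mem : a⁻¹ * x⁻¹ * a * x ∈ S := hgenS ⟨a, ha, rfl⟩
        set u₁ : ↥S := ⟨_, hu₁mem⟩ with hu₁
        have hcmem : (a⁻¹)⁻¹ * ↑(u₁⁻¹) * a⁻¹ ∈ S := hconjS a⁻¹ (inv_mem ha) _ (u₁⁻¹).2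
        have hsplit : u = (⟨(a⁻¹)⁻¹ * ↑(u₁⁻¹) * a⁻¹, hcmem⟩ : ↥S) := by
          apply Subtype.ext; push_cast; rw [hu]; simp only [hu₁]; group
        have hpre : (π (u₁⁻¹)) ^ e = 1 := by
          rw [map_inv, inv_pow, iha u₁ rfl, inv_one]
        rw [hsplit]
        exact conj_pow a⁻¹ (inv_mem ha) u₁⁻¹ hcmem hpre
  -- counting
  set genSetS : Set ↥S := {u : ↥S | (u : G) ∈ genSet} with hgSS
  set M : Subgroup ↥S := Subgroup.closure genSetS with hM
  have himg : Subtype.val '' genSetS = genSet := by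
    ext z
    constructor
    · rintro ⟨u, hu, rfl⟩; exact hu
    · intro hz; exact ⟨⟨z, hgenS hz⟩, hz, rfl⟩
  have hmap : M.map S.subtype = commSub H x := by
    rw [hM, MonoidHom.map_closure, commSub]
    have hi : (⇑S.subtype '' genSetS) = genSet := by
      rw [Subgroup.coe_subtype]; exact himg
    rw [hi]
  have hequivM := Subgroup.equivMapOfInjective M S.subtype (Subgroup.subtype_injective S)
  -- the homomorphism f
  set f : ↥M →* Abelianization ↥S := π.comp M.subtype with hf
  have hrange : f.range = Subgroup.closure (π '' genSetS) := by
    rw [hf, MonoidHom.range_comp, Subgroup.range_subtype, hM, MonoidHom.map_closure]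
  -- bound on the range
  have hgSSfin : genSetS.Finite := by
    have : genSetS = Subtype.val ⁻¹' genSet := rfl
    rw [this]
    exact Set.Finite.preimage (Set.injOn_of_injective Subtype.val_injective) hgenfin
  have hgSScard : genSetS.ncard ≤ n := by
    have h1 : genSetS.ncard = (Subtype.val '' genSetS).ncard :=
      (Set.ncard_image_of_injective _ Subtype.val_injective).symm
    rw [h1, himg]; exact hgencard
  have himfin : (π '' genSetS).Finite := hgSSfin.image _
  have himcard : (π '' genSetS).ncard ≤ n :=
    le_trans (Set.ncard_image_le hgSSfin) hgSScard
  have hexp : ∀ a ∈ π '' genSetS, a ^ e = 1 := by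
    rintro a ⟨u, hu, rfl⟩
    obtain ⟨h, hh, huh⟩ := hu
    exact key h hh u huh
  obtain ⟨hBfin, hBcard⟩ := card_closure_le_of_exponent himfin he1 himcard hexp
  -- bound on the kernel
  have hkermem : ∀ u : ↥M, u ∈ f.ker ↔ ((u : ↥S) ∈ _root_.commutator ↥S) := by
    intro u
    rw [MonoidHom.mem_ker, hf, MonoidHom.comp_apply]
    show (QuotientGroup.mk (M.subtype u) : Abelianization ↥S) = 1 ↔ _
    rw [QuotientGroup.eq_one_iff]
    rfl
  set j : ↥f.ker → ↥(_root_.commutator ↥S) :=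
    fun u => ⟨((u : ↥M) : ↥S), (hkermem u).mp u.2⟩ with hj
  have hjinj : Function.Injective j := by
    intro u v huv
    have h1 := congrArg Subtype.val huv
    exact Subtype.ext (Subtype.ext h1)
  haveI hkerfin : Finite ↥f.ker := Finite.of_injective j hjinj
  have hkercard : Nat.card ↥f.ker ≤ sigmaBound (n ^ n) :=
    le_trans (Nat.card_le_card_of_injective j hjinj) hDcard
  haveI hrangefin : Finite ↥f.range := by rw [hrange]; exact hBfin
  have hrangecard : Nat.card ↥f.range ≤ e ^ n := by rw [hrange]; exact hBcard
  obtain ⟨hMfin, hMcard⟩ := card_le_of_hom f hkerfin hrangefin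
  constructor
  · have : Finite ↥(M.map S.subtype) := Finite.of_equiv _ hequivM.toEquiv
    rwa [hmap] at this
  · have hcardeq : Nat.card ↥(commSub H x) = Nat.card ↥M := by
      rw [← hmap]
      exact (Nat.card_congr hequivM.toEquiv).symm
    rw [hcardeq]
    refine le_trans hMcard ?_
    rw [cBound]
    exact Nat.mul_le_mul hrangecard hkercard

section Assembly
variable {K : Type*} [Group K]

/-- product bound for sup with a normal subgroup -/
lemma card_sup_le (T Ma : Subgroup K) [hn : Ma.Normal] (hfT : Finite T) (hfa : Finite Ma) :
    Finite ↥(T ⊔ Ma) ∧ Nat.card ↥(T ⊔ Ma) ≤ Nat.card T * Nat.card Ma := by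
  set F : ↥T × ↥Ma → ↥(T ⊔ Ma) := fun p =>
    ⟨(p.1 : K) * (p.2 : K), mul_mem (le_sup_left (α := Subgroup K) p.1.2)
      ((le_sup_right (α := Subgroup K)) p.2.2)⟩ with hF
  have hFsurj : Function.Surjective F := by
    rintro ⟨u, hu⟩
    have hu' : u ∈ ((T ⊔ Ma : Subgroup K) : Set K) := hu
    rw [Subgroup.mul_normal T Ma] at hu'
    obtain ⟨t, ht, m, hm, heq⟩ := hu'
    exact ⟨(⟨t, ht⟩, ⟨m, hm⟩), Subtype.ext heq⟩
  constructor
  · exact Finite.of_surjective F hFsurj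
  · refine (Nat.card_le_card_of_surjective F hFsurj).trans ?_
    rw [Nat.card_prod]

/-- bound for the cardinality of a finite sup of subgroups normalized by an ambient
subgroup containing them all -/
lemma card_finset_iSup_le {ι : Type*} (s : Finset ι) (N : ι → Subgroup K) (Hb : Subgroup K)
    (hle : ∀ i ∈ s, N i ≤ Hb)
    (hstab : ∀ i ∈ s, ∀ h ∈ Hb, ∀ a ∈ N i, h⁻¹ * a * h ∈ N i)
    (hfin : ∀ i ∈ s, Finite (N i)) {c : ℕ} (hc : ∀ i ∈ s, Nat.card (N i) ≤ c) :
    Finite ↥(⨆ i ∈ s, N i) ∧ Nat.card ↥(⨆ i ∈ s, N i) ≤ c ^ s.card := by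
  classical
  -- work inside Hb
  set N' : ι → Subgroup ↥Hb := fun i => (N i).subgroupOf Hb with hN'
  have hnormal : ∀ i ∈ s, (N' i).Normal := by
    intro i hi
    constructor
    intro a ha g
    rw [hN', Subgroup.mem_subgroupOf] at ha ⊢
    have := hstab i hi ((g : K)⁻¹) (inv_mem g.2) a ha
    simpa [mul_assoc] using this
  -- the main induction inside Hb
  have main : ∀ t : Finset ι, t ⊆ s →
      Finite ↥(⨆ i ∈ t, N' i) ∧ Nat.card ↥(⨆ i ∈ t, N' i) ≤ c ^ t.card := by
    intro t
    induction t using Finset.induction_on with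
    | empty =>
        intro _
        simp only [Finset.notMem_empty, iSup_false, iSup_bot, Finset.card_empty, pow_zero]
        exact ⟨inferInstance, by rw [Subgroup.card_bot]⟩
    | insert a t ha ih =>
        intro hsub
        have has : a ∈ s := hsub (Finset.mem_insert_self a t)
        have hts : t ⊆ s := fun i hi => hsub (Finset.mem_insert_of_mem hi)
        obtain ⟨ihfin, ihcard⟩ := ih hts
        haveI := hnormal a has
        have hsup : (⨆ i ∈ insert a t, N' i) = (⨆ i ∈ t, N' i) ⊔ N' a := by
          rw [Finset.iSup_insert, sup_comm]
        have hinj : Function.Injective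
            (fun u : ↥(N' a) => (⟨((u : ↥Hb) : K), (Subgroup.mem_subgroupOf.mp u.2)⟩ : ↥(N a))) := by
          intro u v huv
          have h1 := congrArg Subtype.val huv
          exact Subtype.ext (Subtype.ext h1)
        haveI hNafin := hfin a has
        haveI : Finite ↥(N' a) := Finite.of_injective _ hinj
        have hcarda : Nat.card ↥(N' a) ≤ c :=
          (Nat.card_le_card_of_injective _ hinj).trans (hc a has)
        obtain ⟨hfinsup, hcardsup⟩ := card_sup_le (⨆ i ∈ t, N' i) (N' a) ihfin this
        rw [hsup]
        constructor
        · exact hfinsup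
        · refine hcardsup.trans ?_
          rw [Finset.card_insert_of_notMem ha, pow_succ]
          exact Nat.mul_le_mul ihcard hcarda
  obtain ⟨hfin', hcard'⟩ := main s le_rfl
  -- transfer back
  have hmap : (⨆ i ∈ s, N' i).map Hb.subtype = ⨆ i ∈ s, N i := by
    rw [(Subgroup.gc_map_comap Hb.subtype).l_iSup]
    refine iSup_congr (fun i => ?_)
    rw [(Subgroup.gc_map_comap Hb.subtype).l_iSup]
    refine iSup_congr (fun hi => ?_)
    rw [hN', Subgroup.subgroupOf_map_subtype, inf_of_le_left (hle i hi)]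
  have hequiv := Subgroup.equivMapOfInjective (⨆ i ∈ s, N' i) Hb.subtype
    (Subgroup.subtype_injective Hb)
  rw [hmap] at hequiv
  constructor
  · exact Finite.of_equiv _ hequiv.toEquiv
  · rw [← Nat.card_congr hequiv.toEquiv]
    exact hcard'

end Assembly

-- final theorem
/-- Lemma 2.3: if `X` is a normal symmetric subset of `G` with `|x^G| ≤ n` for every
`x ∈ X` and `H = ⟨X⟩`, then for each `x ∈ X` the normal closure `⟨[H,x]^G⟩` is finite
of `n`-bounded order. -/
theorem normalClosure_commSub_finite_of_bounded_classes :
    ∃ f : ℕ → ℕ, ∀ (n : ℕ) (G : Type) (_ : Group G) (X : Set G),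
      X⁻¹ = X → (∀ g : G, ∀ x ∈ X, g⁻¹ * x * g ∈ X) →
      (∀ x ∈ X, (conjClass x).Finite ∧ (conjClass x).ncard ≤ n) →
      ∀ x ∈ X,
        Finite (Subgroup.normalClosure ((commSub (Subgroup.closure X) x : Subgroup G) : Set G)) ∧
          Nat.card (Subgroup.normalClosure ((commSub (Subgroup.closure X) x : Subgroup G) : Set G))
            ≤ f n := by
  classical
  refine ⟨fun n => cBound n ^ n, ?_⟩
  intro n G _ X hsym hnorm hcls x hx
  set H := Subgroup.closure X with hH
  have hXH : X ⊆ ↑H := Subgroup.subset_closure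
  have hconjX : ∀ z : G, z ∈ conjClass x → z ∈ X := by
    rintro z ⟨g, rfl⟩; exact hnorm g x hx
  have hDfin : (conjClass x).Finite := (hcls x hx).1
  set Dfin : Finset G := hDfin.toFinset with hDfin'
  have hxD : x ∈ Dfin := hDfin.mem_toFinset.mpr (self_mem_conjClass x)
  -- each commSub H z for z ∈ Dfin
  have hmemX : ∀ z ∈ Dfin, z ∈ X := fun z hz => hconjX z (hDfin.mem_toFinset.mp hz)
  have hle : ∀ z ∈ Dfin, commSub H z ≤ H := by
    intro z hz
    rw [commSub, Subgroup.closure_le]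
    rintro w ⟨h, hh, rfl⟩
    exact mul_mem (mul_mem (mul_mem (inv_mem hh) (inv_mem (hXH (hmemX z hz)))) hh)
      (hXH (hmemX z hz))
  have hstab : ∀ z ∈ Dfin, ∀ h' ∈ H, ∀ a ∈ commSub H z, h'⁻¹ * a * h' ∈ commSub H z := by
    intro z hz h' hh' a ha
    induction ha using Subgroup.closure_induction with
    | mem w hw =>
        obtain ⟨h, hh, rfl⟩ := hw
        have heq : h'⁻¹ * (h⁻¹ * z⁻¹ * h * z) * h' =
            ((h * h')⁻¹ * z⁻¹ * (h * h') * z) * (h'⁻¹ * z⁻¹ * h' * z)⁻¹ := by group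
        rw [heq]
        exact mul_mem (Subgroup.subset_closure ⟨h * h', mul_mem hh hh', rfl⟩)
          (inv_mem (Subgroup.subset_closure ⟨h', hh', rfl⟩))
    | one => simpa using one_mem _
    | mul a b _ _ iha ihb =>
        have heq : h'⁻¹ * (a * b) * h' = (h'⁻¹ * a * h') * (h'⁻¹ * b * h') := by group
        rw [heq]; exact mul_mem iha ihb
    | inv a _ ih =>
        have heq : h'⁻¹ * a⁻¹ * h' = (h'⁻¹ * a * h')⁻¹ := by group
        rw [heq]; exact inv_mem ih
  have hbounds : ∀ z ∈ Dfin, Finite ↥(commSub H z) ∧ Nat.card ↥(commSub H z) ≤ cBound n :=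
    fun z hz => commSub_bound hsym hnorm hcls (hmemX z hz)
  -- the candidate bounding subgroup
  set K' : Subgroup G := ⨆ z ∈ Dfin, commSub H z with hK'
  obtain ⟨hK'fin, hK'card⟩ := card_finset_iSup_le Dfin (fun z => commSub H z) H hle hstab
    (fun z hz => (hbounds z hz).1) (fun z hz => (hbounds z hz).2)
  -- conjugation-stability of Dfin
  have hconjD : ∀ (g z : G), z ∈ Dfin → g * z * g⁻¹ ∈ Dfin := by
    intro g z hz
    obtain ⟨a, rfl⟩ := hDfin.mem_toFinset.mp hz
    refine hDfin.mem_toFinset.mpr ⟨a * g⁻¹, by group⟩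
  have hHnorm : ∀ (g h : G), h ∈ H → g * h * g⁻¹ ∈ H := by
    intro g h hh
    induction hh using Subgroup.closure_induction with
    | mem w hw => exact Subgroup.subset_closure (by simpa using hnorm g⁻¹ w hw)
    | one => simpa using one_mem H
    | mul a b _ _ iha ihb =>
        have heq : g * (a * b) * g⁻¹ = (g * a * g⁻¹) * (g * b * g⁻¹) := by group
        rw [heq]; exact mul_mem iha ihb
    | inv a _ ih =>
        have heq : g * a⁻¹ * g⁻¹ = (g * a * g⁻¹)⁻¹ := by group
        rw [heq]; exact inv_mem ih
  have hconjmap : ∀ g : G, K'.map (MulAut.conj g).toMonoidHom ≤ K' := by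
    intro g
    rw [hK', (Subgroup.gc_map_comap _).l_iSup]
    refine iSup_le (fun z => ?_)
    rw [(Subgroup.gc_map_comap _).l_iSup]
    refine iSup_le (fun hz => ?_)
    rw [commSub, MonoidHom.map_closure, Subgroup.closure_le]
    rintro w ⟨v, ⟨h, hh, rfl⟩, rfl⟩
    have hmem : (g * h * g⁻¹)⁻¹ * (g * z * g⁻¹)⁻¹ * (g * h * g⁻¹) * (g * z * g⁻¹)
        ∈ commSub H (g * z * g⁻¹) :=
      Subgroup.subset_closure ⟨g * h * g⁻¹, hHnorm g h hh, rfl⟩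
    have hle2 : commSub H (g * z * g⁻¹) ≤ K' := by
      rw [hK']
      exact le_iSup₂ (f := fun z (_ : z ∈ Dfin) => commSub H z) (g * z * g⁻¹) (hconjD g z hz)
    have heq : (MulAut.conj g).toMonoidHom (h⁻¹ * z⁻¹ * h * z)
        = (g * h * g⁻¹)⁻¹ * (g * z * g⁻¹)⁻¹ * (g * h * g⁻¹) * (g * z * g⁻¹) := by
      simp only [MulEquiv.coe_toMonoidHom, MulAut.conj_apply]
      group
    show (MulAut.conj g).toMonoidHom (h⁻¹ * z⁻¹ * h * z) ∈ K'
    rw [heq]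
    exact hle2 hmem
  have hK'norm : K'.Normal := by
    constructor
    intro a ha g
    have h1 : (MulAut.conj g).toMonoidHom a ∈ K'.map (MulAut.conj g).toMonoidHom :=
      Subgroup.mem_map_of_mem _ ha
    have h2 := hconjmap g h1
    simpa only [MulEquiv.coe_toMonoidHom, MulAut.conj_apply] using h2
  -- normal closure is inside K'
  have hxle : commSub H x ≤ K' := by
    rw [hK']
    exact le_iSup₂ (f := fun z (_ : z ∈ Dfin) => commSub H z) x hxD
  haveI := hK'norm
  have hncle : Subgroup.normalClosure ((commSub H x : Subgroup G) : Set G) ≤ K' :=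
    Subgroup.normalClosure_le_normal hxle
  haveI := hK'fin
  have hinj := Subgroup.inclusion_injective hncle
  constructor
  · exact Finite.of_injective _ hinj
  · refine (Nat.card_le_card_of_injective _ hinj).trans ?_
    refine hK'card.trans ?_
    -- cBound n ^ Dfin.card ≤ cBound n ^ n
    have hn1 : 1 ≤ n := by
      have h1 : 1 ≤ (conjClass x).ncard :=
        (Set.ncard_pos hDfin).mpr ⟨x, self_mem_conjClass x⟩
      exact le_trans h1 (hcls x hx).2
    have hcb1 : 1 ≤ cBound n := by
      have h1 : 1 ≤ sigmaBound (n ^ n) := by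
        rw [sigmaBound, Subgroup.cardCommutatorBound]
        refine Nat.one_le_pow _ _ (Nat.pos_of_ne_zero ?_)
        have : 0 < n ^ n * (n ^ n) := by positivity
        exact (Nat.pow_pos (by positivity)).ne'
      rw [cBound]
      have h2 : 1 ≤ (sigmaBound (n ^ 2)).factorial ^ n :=
        Nat.one_le_pow _ _ (Nat.factorial_pos _)
      exact Nat.mul_le_mul h2 h1
    have hcard : Dfin.card ≤ n := by
      have : (conjClass x).ncard = Dfin.card := Set.ncard_eq_toFinset_card _ hDfin
      rw [← this]
      exact (hcls x hx).2
    exact Nat.pow_le_pow_right hcb1 hcard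
end

section
/- Let G be a group and x, y ∈ G with |x^G| = m and |(yx)^G| ≤ m. Suppose there exist b₁, …, b_m ∈ G such that x^G = {x^{b₁}, …, x^{b_m}} and y centralizes each b_i. Then [G, y] ≤ [G, x]. -/
/-- The subgroup `[G, x]` generated by the commutators `[g, x]` with `g ∈ G`. -/
def commSubFull {G : Type*} [Group G] (x : G) : Subgroup G :=
  Subgroup.closure {z | ∃ g : G, z = g⁻¹ * x⁻¹ * g * x}

lemma commSubFull_normal {G : Type*} [Group G] (x : G) : (commSubFull x).Normal := by
  constructor
  intro n hn h
  induction hn using Subgroup.closure_induction with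
  | mem z hz =>
      obtain ⟨g, rfl⟩ := hz
      have key : h * (g⁻¹ * x⁻¹ * g * x) * h⁻¹ =
          ((g * h⁻¹)⁻¹ * x⁻¹ * (g * h⁻¹) * x) * ((h⁻¹)⁻¹ * x⁻¹ * h⁻¹ * x)⁻¹ := by
        group
      rw [key]
      exact mul_mem (Subgroup.subset_closure ⟨g * h⁻¹, rfl⟩)
        (inv_mem (Subgroup.subset_closure ⟨h⁻¹, rfl⟩))
  | one => simpa using (commSubFull x).one_mem
  | mul a c _ _ ha hc =>
      have : h * (a * c) * h⁻¹ = (h * a * h⁻¹) * (h * c * h⁻¹) := by group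
      rw [this]; exact mul_mem ha hc
  | inv a _ ha =>
      have : h * a⁻¹ * h⁻¹ = (h * a * h⁻¹)⁻¹ := by group
      rw [this]; exact inv_mem ha

/-- Lemma 2.4: if `|x^G| = m`, `|(yx)^G| ≤ m`, `x^G = {x^{b₁},…,x^{b_m}}` and `y`
centralizes `b₁,…,b_m`, then `[G, y] ≤ [G, x]`. -/
theorem commSubFull_le_commSubFull
    {G : Type*} [Group G] (x y : G) (m : ℕ) (hm : 1 ≤ m)
    (hx : (conjClass x).Finite ∧ (conjClass x).ncard = m)
    (hyx : (conjClass (y * x)).Finite ∧ (conjClass (y * x)).ncard ≤ m)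
    (b : Fin m → G)
    (hb : conjClass x = Set.range (fun i => (b i)⁻¹ * x * (b i)))
    (hyb : ∀ i, y * b i = b i * y) :
    commSubFull y ≤ commSubFull x := by
  obtain ⟨hxf, hxm⟩ := hx
  obtain ⟨hyxf, hyxm⟩ := hyx
  have hyb' : ∀ i, y * (b i)⁻¹ = (b i)⁻¹ * y := by
    intro i
    have := hyb i
    calc y * (b i)⁻¹ = (b i)⁻¹ * (b i * y) * (b i)⁻¹ := by group
    _ = (b i)⁻¹ * (y * b i) * (b i)⁻¹ := by rw [this]
    _ = (b i)⁻¹ * y := by group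
  -- f is injective
  set f : Fin m → G := fun i => (b i)⁻¹ * x * (b i) with hf
  have hfinj : Function.Injective f := by
    have h1 : Nat.card (Set.range f) = m := by
      rw [Nat.card_coe_set_eq, ← hb, hxm]
    have hsurj : Function.Surjective (Set.rangeFactorization f) :=
      Set.rangeFactorization_surjective
    have hbij : Function.Bijective (Set.rangeFactorization f) := by
      rw [Nat.bijective_iff_surjective_and_card]
      exact ⟨hsurj, by simp [h1]⟩
    intro i j hij
    apply hbij.injective
    ext
    simpa [Set.rangeFactorization] using hij
  -- the set T
  set T : Set G := Set.range (fun i => y * f i) with hT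
  have hTinj : Function.Injective (fun i => y * f i) :=
    fun i j h => hfinj (by simpa using h)
  have hTsub : T ⊆ conjClass (y * x) := by
    rintro _ ⟨i, rfl⟩
    refine ⟨b i, ?_⟩
    simp only [hf]
    refine Eq.symm ?_
    calc (b i)⁻¹ * (y * x) * b i = ((b i)⁻¹ * y) * (x * b i) := by group
    _ = (y * (b i)⁻¹) * (x * b i) := by rw [hyb' i]
    _ = y * ((b i)⁻¹ * x * b i) := by group
  have hTcard : T.ncard = m := by
    rw [← Nat.card_coe_set_eq, Nat.card_range_of_injective hTinj, Nat.card_eq_fintype_card,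
      Fintype.card_fin]
  have hTeq : T = conjClass (y * x) :=
    Set.eq_of_subset_of_ncard_le hTsub (by rw [hTcard]; exact hyxm) hyxf
  -- key: every conjugate of y*x has the form y * f i
  have hkey : ∀ g : G, ∃ i, g⁻¹ * (y * x) * g = y * f i := by
    intro g
    have : g⁻¹ * (y * x) * g ∈ conjClass (y * x) := ⟨g, rfl⟩
    rw [← hTeq] at this
    obtain ⟨i, hi⟩ := this
    exact ⟨i, hi.symm⟩
  -- conclude
  have hnorm := commSubFull_normal x
  rw [commSubFull, Subgroup.closure_le]
  rintro _ ⟨g, rfl⟩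
  obtain ⟨i, hi⟩ := hkey g
  have hw : g⁻¹ * y⁻¹ * g * y =
      x * ((g⁻¹ * x⁻¹ * g * x)⁻¹ * ((b i)⁻¹ * x⁻¹ * (b i) * x)) * x⁻¹ := by
    have h2 : g⁻¹ * y⁻¹ * g * y = (g⁻¹ * x * g) * ((g⁻¹ * (y * x) * g)⁻¹ * (y * x)) * x⁻¹ := by
      group
    rw [h2, hi, hf]
    group
  have hmem : (g⁻¹ * x⁻¹ * g * x)⁻¹ * ((b i)⁻¹ * x⁻¹ * (b i) * x) ∈ commSubFull x :=
    mul_mem (inv_mem (Subgroup.subset_closure ⟨g, rfl⟩))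
      (Subgroup.subset_closure ⟨b i, rfl⟩)
  rw [SetLike.mem_coe, hw]
  exact hnorm.conj_mem _ hmem x
end

section
/- Under the hypotheses of the previous lemma (|x^G| = m, |(yx)^G| ≤ m, x^G = {x^{b₁},…,x^{b_m}}, and y ∈ C_G(b₁,…,b_m)), the conjugacy class of yx equals {yx^{b₁}, …, yx^{b_m}}. -/
/-- Under the hypotheses of Lemma 2.4, the conjugacy class of `yx` is exactly
`{yx^{b₁}, …, yx^{b_m}}`. -/
theorem conjClass_mul_eq
    {G : Type*} [Group G] (x y : G) (m : ℕ) (hm : 1 ≤ m)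
    (hx : (conjClass x).Finite ∧ (conjClass x).ncard = m)
    (hyx : (conjClass (y * x)).Finite ∧ (conjClass (y * x)).ncard ≤ m)
    (b : Fin m → G)
    (hb : conjClass x = Set.range (fun i => (b i)⁻¹ * x * (b i)))
    (hyb : ∀ i, y * b i = b i * y) :
    conjClass (y * x) = Set.range (fun i => y * ((b i)⁻¹ * x * (b i))) := by
  have hc : ∀ i, y * (b i)⁻¹ = (b i)⁻¹ * y := fun i =>
    (Commute.inv_right (hyb i : Commute y (b i)) : _)
  have hsub : Set.range (fun i => y * ((b i)⁻¹ * x * (b i))) ⊆ conjClass (y * x) := by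
    rintro z ⟨i, rfl⟩
    refine ⟨b i, ?_⟩
    have := hc i
    calc y * ((b i)⁻¹ * x * b i) = (y * (b i)⁻¹) * x * b i := by group
    _ = ((b i)⁻¹ * y) * x * b i := by rw [this]
    _ = (b i)⁻¹ * (y * x) * b i := by group
  have h1 : Set.range (fun i => y * ((b i)⁻¹ * x * (b i)))
      = (fun z => y * z) '' conjClass x := by
    rw [hb, ← Set.range_comp]
    rfl
  have hcard : (Set.range (fun i => y * ((b i)⁻¹ * x * (b i)))).ncard = m := by
    rw [h1, Set.ncard_image_of_injective _ (mul_right_injective y), hx.2]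
  exact (Set.eq_of_subset_of_ncard_le hsub (by rw [hcard]; exact hyx.2) hyx.1).symm
end

section
/- Let G be a group whose center Z(G) has finite index k. Then the commutator subgroup G' is finite, of order bounded in terms of k. -/
open scoped commutatorElement

lemma commutator_mul_center {G : Type} [Group G] (a b z w : G)
    (hz : z ∈ Subgroup.center G) (hw : w ∈ Subgroup.center G) :
    ⁅a * z, b * w⁆ = ⁅a, b⁆ := by
  have hz' : z * (b * w) = (b * w) * z := (Subgroup.mem_center_iff.mp hz (b * w)).symm
  have hw' : w * a⁻¹ = a⁻¹ * w := (Subgroup.mem_center_iff.mp hw a⁻¹).symm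
  simp only [commutatorElement_def, mul_inv_rev]
  calc a * z * (b * w) * (z⁻¹ * a⁻¹) * (w⁻¹ * b⁻¹)
      = a * (z * (b * w) * z⁻¹) * a⁻¹ * w⁻¹ * b⁻¹ := by group
    _ = a * b * (w * a⁻¹) * w⁻¹ * b⁻¹ := by rw [hz']; group
    _ = a * b * a⁻¹ * b⁻¹ := by rw [hw']; group

lemma finite_commutatorSet_of_index {G : Type} [Group G] (k : ℕ) (hk : k ≠ 0)
    (h : (Subgroup.center G).index = k) :
    Finite (commutatorSet G) ∧ Nat.card (commutatorSet G) ≤ k * k := by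
  have hfin : Finite (G ⧸ Subgroup.center G) := by
    refine Nat.finite_of_card_ne_zero ?_
    rw [← Subgroup.index_eq_card, h]
    exact hk
  set Z := Subgroup.center G
  let f : (G ⧸ Z) × (G ⧸ Z) → G := fun p => ⁅p.1.out, p.2.out⁆
  have hsurj : ∀ x ∈ commutatorSet G, ∃ p, f p = x := by
    rintro x ⟨a, b, rfl⟩
    refine ⟨(QuotientGroup.mk a, QuotientGroup.mk b), ?_⟩
    have ha : a⁻¹ * (QuotientGroup.mk a : G ⧸ Z).out ∈ Z :=
      QuotientGroup.eq.mp (QuotientGroup.out_eq' _).symm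
    have hb : b⁻¹ * (QuotientGroup.mk b : G ⧸ Z).out ∈ Z :=
      QuotientGroup.eq.mp (QuotientGroup.out_eq' _).symm
    have : f (QuotientGroup.mk a, QuotientGroup.mk b)
        = ⁅a * (a⁻¹ * (QuotientGroup.mk a : G ⧸ Z).out),
           b * (b⁻¹ * (QuotientGroup.mk b : G ⧸ Z).out)⁆ := by
      simp [f, mul_assoc]
    rw [this, commutator_mul_center a b _ _ ha hb]
  let g : (G ⧸ Z) × (G ⧸ Z) → commutatorSet G := fun p =>
    ⟨f p, ⟨_, _, rfl⟩⟩
  have hgsurj : Function.Surjective g := by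
    rintro ⟨x, hx⟩
    obtain ⟨p, hp⟩ := hsurj x hx
    exact ⟨p, Subtype.ext hp⟩
  refine ⟨Finite.of_surjective g hgsurj, ?_⟩
  calc Nat.card (commutatorSet G) ≤ Nat.card ((G ⧸ Z) × (G ⧸ Z)) :=
        Nat.card_le_card_of_surjective g hgsurj
    _ = k * k := by
        rw [Nat.card_prod]
        rw [show Nat.card (G ⧸ Z) = k by rw [← Subgroup.index_eq_card]; exact h]

/-- Schur's theorem: if the center of `G` has finite index `k`, then the commutator
subgroup `G'` is finite of `k`-bounded order. -/
theorem schur_theorem :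
    ∃ f : ℕ → ℕ, ∀ (k : ℕ), k ≠ 0 → ∀ (G : Type) (_ : Group G),
      (Subgroup.center G).index = k →
      Finite ↥(commutator G) ∧ Nat.card ↥(commutator G) ≤ f k := by
  refine ⟨fun k => (Finset.range (k * k + 1)).sup Subgroup.cardCommutatorBound,
    fun k hk G _ h => ?_⟩
  obtain ⟨hfin, hcard⟩ := finite_commutatorSet_of_index k hk h
  refine ⟨inferInstance, ?_⟩
  refine le_trans (Subgroup.card_commutator_le_of_finite_commutatorSet G) ?_
  exact Finset.le_sup (Finset.mem_range.mpr (Nat.lt_succ_of_le hcard))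
end

section
/- Let K, n be positive integers, G a group, and A a K-approximate subgroup of G with |[g,a]^G| ≤ n for all g ∈ G and a ∈ A. Let E = {e₁,…,e_K} with AA ⊆ EA, and suppose [G,E] ≤ Z(H), where H is the subgroup generated by all G-conjugates of commutators [g,a] (g ∈ G, a ∈ A). Let m be the maximal index of C_H(x) in H over x in this generating set. Then for every b ∈ ⟨A⟩ and g ∈ G, the H-conjugacy class of [g,b] has size at most m. -/
open Pointwise

/-- The conjugacy class of `x` under conjugation by elements of a subgroup `H`. -/
def conjClassIn {G : Type*} [Group G] (H : Subgroup G) (x : G) : Set G :=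
  {y | ∃ h ∈ H, y = h⁻¹ * x * h}

/-- Lemma 4.2: under `[G, E] ≤ Z(H)`, for every `b ∈ ⟨A⟩` and `g ∈ G` the
`H`-conjugacy class of `[g, b]` has size at most `m`. -/
theorem conjClassIn_comm_le
    (K n m : ℕ) (hK : 0 < K) (hn : 0 < n)
    (G : Type*) [Group G] (A : Set G) (hsym : A⁻¹ = A)
    (E : Finset G) (hE : E.card ≤ K) (hEA : A * A ⊆ (E : Set G) * A)
    (hclass : ∀ (g : G), ∀ a ∈ A, (conjClass (g⁻¹ * a⁻¹ * g * a)).Finite ∧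
      (conjClass (g⁻¹ * a⁻¹ * g * a)).ncard ≤ n)
    (X : Set G) (hX : X = {z | ∃ b g : G, ∃ a ∈ A, z = b⁻¹ * (g⁻¹ * a⁻¹ * g * a) * b})
    (H : Subgroup G) (hH : H = Subgroup.closure X)
    (hGE : Subgroup.closure {z : G | ∃ g : G, ∃ e ∈ E, z = g⁻¹ * e⁻¹ * g * e} ≤
      H ⊓ Subgroup.centralizer (H : Set G))
    (hm : ∀ x ∈ X, (conjClassIn H x).Finite ∧ (conjClassIn H x).ncard ≤ m)
    (hmax : ∃ x ∈ X, (conjClassIn H x).ncard = m) :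
    ∀ b ∈ Subgroup.closure A, ∀ g : G,
      (conjClassIn H (g⁻¹ * b⁻¹ * g * b)).Finite ∧
        (conjClassIn H (g⁻¹ * b⁻¹ * g * b)).ncard ≤ m := by
  -- `X` is closed under conjugation
  have hXconj : ∀ x ∈ X, ∀ f : G, f⁻¹ * x * f ∈ X := by
    rintro x hx f
    rw [hX] at hx ⊢
    obtain ⟨b, g, a, ha, rfl⟩ := hx
    exact ⟨b * f, g, a, ha, by group⟩
  -- hence `H` is closed under conjugation
  have hHconj : ∀ z ∈ H, ∀ f : G, f⁻¹ * z * f ∈ H := by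
    intro z hz f
    rw [hH] at hz ⊢
    induction hz using Subgroup.closure_induction with
    | mem x hx => exact Subgroup.subset_closure (hXconj x hx f)
    | one => simpa using one_mem _
    | mul x y hx hy ihx ihy =>
        have : f⁻¹ * (x * y) * f = (f⁻¹ * x * f) * (f⁻¹ * y * f) := by group
        rw [this]; exact mul_mem ihx ihy
    | inv x hx ihx =>
        have : f⁻¹ * x⁻¹ * f = (f⁻¹ * x * f)⁻¹ := by group
        rw [this]; exact inv_mem ihx
  set Z : Subgroup G := H ⊓ Subgroup.centralizer (H : Set G) with hZ
  -- `Z` is closed under conjugation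
  have hZconj : ∀ z ∈ Z, ∀ f : G, f⁻¹ * z * f ∈ Z := by
    intro z hz f
    obtain ⟨hzH, hzC⟩ := hz
    refine ⟨hHconj z hzH f, Subgroup.mem_centralizer_iff.mpr ?_⟩
    intro h hh
    have hh' : f * h * f⁻¹ ∈ H := by
      have := hHconj h hh f⁻¹
      simpa using this
    have hc : (f * h * f⁻¹) * z = z * (f * h * f⁻¹) :=
      Subgroup.mem_centralizer_iff.mp hzC _ hh'
    have : h * (f⁻¹ * z * f) = f⁻¹ * ((f * h * f⁻¹) * z) * f := by group
    rw [this, hc]; group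
  -- commutators with elements of ⟨E⟩ lie in `Z`
  have hcommE : ∀ e ∈ Subgroup.closure (E : Set G), ∀ g : G,
      g⁻¹ * e⁻¹ * g * e ∈ Z := by
    intro e he
    induction he using Subgroup.closure_induction with
    | mem x hx =>
        intro g
        exact hGE (Subgroup.subset_closure ⟨g, x, hx, rfl⟩)
    | one => intro g; simpa using one_mem Z
    | mul x y hx hy ihx ihy =>
        intro g
        have key : g⁻¹ * (x * y)⁻¹ * g * (x * y)
            = (g⁻¹ * y⁻¹ * g * y) * (y⁻¹ * (g⁻¹ * x⁻¹ * g * x) * y) := by group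
        rw [key]
        exact mul_mem (ihy g) (hZconj _ (ihx g) y)
    | inv x hx ihx =>
        intro g
        have key : g⁻¹ * x⁻¹⁻¹ * g * x⁻¹
            = (x⁻¹)⁻¹ * (g⁻¹ * x⁻¹ * g * x)⁻¹ * x⁻¹ := by group
        rw [key]
        exact hZconj _ (inv_mem (ihx g)) x⁻¹
  -- decomposition of elements of ⟨A⟩
  have hdecomp : ∀ b ∈ Subgroup.closure A,
      b = 1 ∨ ∃ e ∈ Subgroup.closure (E : Set G), ∃ a ∈ A, b = e * a := by
    intro b hb
    induction hb using Subgroup.closure_induction_right with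
    | one => exact Or.inl rfl
    | mul_right x hx y hy ih =>
        right
        have hy' : y ∈ A := hy
        rcases ih with rfl | ⟨e, he, a, ha, rfl⟩
        · exact ⟨1, one_mem _, y, hy', by simp⟩
        · have : a * y ∈ (E : Set G) * A := hEA (Set.mul_mem_mul ha hy')
          obtain ⟨e', he', a', ha', heq⟩ := this
          exact ⟨e * e', mul_mem he (Subgroup.subset_closure he'), a', ha',
            by rw [mul_assoc, ← heq]; simp [mul_assoc]⟩
    | mul_inv_cancel x hx y hy ih =>
        right
        have hy' : y⁻¹ ∈ A := by rw [← hsym]; exact Set.inv_mem_inv.mpr hy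
        rcases ih with rfl | ⟨e, he, a, ha, rfl⟩
        · exact ⟨1, one_mem _, y⁻¹, hy', by simp⟩
        · have : a * y⁻¹ ∈ (E : Set G) * A := hEA (Set.mul_mem_mul ha hy')
          obtain ⟨e', he', a', ha', heq⟩ := this
          exact ⟨e * e', mul_mem he (Subgroup.subset_closure he'), a', ha',
            by rw [mul_assoc, ← heq]; simp [mul_assoc]⟩
  -- translation by a central element
  have hkey : ∀ (x z : G), z ∈ Z →
      conjClassIn H (x * z) = (fun y => y * z) '' conjClassIn H x := by
    intro x z hz
    obtain ⟨hzH, hzC⟩ := hz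
    ext y
    simp only [conjClassIn, Set.mem_setOf_eq, Set.mem_image]
    constructor
    · rintro ⟨h, hh, rfl⟩
      refine ⟨h⁻¹ * x * h, ⟨h, hh, rfl⟩, ?_⟩
      have hc : h * z = z * h := Subgroup.mem_centralizer_iff.mp hzC h hh
      have e1 : h⁻¹ * (x * z) * h = h⁻¹ * x * (z * h) := by group
      rw [e1, ← hc]; group
    · rintro ⟨w, ⟨h, hh, rfl⟩, rfl⟩
      refine ⟨h, hh, ?_⟩
      have hc : h * z = z * h := Subgroup.mem_centralizer_iff.mp hzC h hh
      have e1 : h⁻¹ * (x * z) * h = h⁻¹ * x * (z * h) := by group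
      rw [e1, ← hc]; group
  -- m ≥ 1
  have hm1 : 1 ≤ m := by
    obtain ⟨x, hx, hxm⟩ := hmax
    have hfin := (hm x hx).1
    have hne : (conjClassIn H x).Nonempty := ⟨x, 1, one_mem _, by simp⟩
    have := (Set.ncard_pos hfin).mpr hne
    omega
  intro b hb g
  rcases hdecomp b hb with rfl | ⟨e, he, a, ha, rfl⟩
  · have h1 : conjClassIn H (g⁻¹ * (1 : G)⁻¹ * g * 1) = {1} := by
      ext y
      simp only [conjClassIn, Set.mem_setOf_eq, Set.mem_singleton_iff]
      constructor
      · rintro ⟨h, hh, rfl⟩; group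
      · rintro rfl; exact ⟨1, one_mem _, by group⟩
    rw [h1]
    exact ⟨Set.finite_singleton 1, by simpa using hm1⟩
  · have hx0 : g⁻¹ * a⁻¹ * g * a ∈ X := by
      rw [hX]; exact ⟨1, g, a, ha, by group⟩
    have hzZ : a⁻¹ * (g⁻¹ * e⁻¹ * g * e) * a ∈ Z := hZconj _ (hcommE e he g) a
    have heq : g⁻¹ * (e * a)⁻¹ * g * (e * a)
        = (g⁻¹ * a⁻¹ * g * a) * (a⁻¹ * (g⁻¹ * e⁻¹ * g * e) * a) := by group
    rw [heq, hkey _ _ hzZ]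
    obtain ⟨hfin, hcard⟩ := hm _ hx0
    refine ⟨hfin.image _, ?_⟩
    rw [Set.ncard_image_of_injective _ (mul_left_injective _)]
    exact hcard
end
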